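/- Suppose k₁ > 0 and k₂ < 0, and set q₀ = (2/π)·arctan(|b₂|/k₁). Then q₀ ∈ (0,1), and for every q with 0 < q < q₀, every eigenvalue λ ∈ ℂ of J₀₂ satisfies |arg λ| > qπ/2; moreover for q = q₀ every eigenvalue λ of J₀₂ satisfies |arg λ| ≥ q₀π/2. -/

import Mathlib

lemma abs_arctan_eq (x : ℝ) : |Real.arctan x| = Real.arctan |x| := by
  rcases le_or_gt 0 x with h | h
  · rw [abs_of_nonneg h, abs_of_nonneg (by simpa using Real.arctan_strictMono.monotone h)]
  · rw [abs_of_neg h,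
      abs_of_neg (by simpa using Real.arctan_strictMono h), ← Real.arctan_neg]

lemma arg_mk_pos_re {a b : ℝ} (ha : 0 < a) :
    Complex.arg ((a : ℂ) + (b : ℂ) * Complex.I) = Real.arctan (b / a) := by
  set z : ℂ := (a : ℂ) + (b : ℂ) * Complex.I
  have hre : z.re = a := by simp [z]
  have him : z.im = b := by simp [z]
  have habs : |z.arg| < Real.pi / 2 :=
    Complex.abs_arg_lt_pi_div_two_iff.mpr (Or.inl (by rw [hre]; exact ha))
  have h1 : -(Real.pi / 2) < z.arg := by
    have := abs_lt.mp habs; linarith [this.1]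
  have h2 : z.arg < Real.pi / 2 := (abs_lt.mp habs).2
  have := Real.arctan_tan h1 h2
  rw [Complex.tan_arg, hre, him] at this
  exact this.symm

/-- If `k₁ > 0`, `k₂ < 0` and `q₀ = (2/π)·arctan(|b₂|/k₁)`, then `q₀ ∈ (0,1)`,
every eigenvalue of `J₀₂` satisfies `|arg λ| > qπ/2` for `0 < q < q₀`, and
`|arg λ| ≥ q₀π/2` at `q = q₀`. -/
theorem stmt_9 (b₂ k₁ k₂ : ℝ) (hb₂ : b₂ ≠ 0) (hk₁ : 0 < k₁) (hk₂ : k₂ < 0)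
    (q₀ : ℝ) (hq₀ : q₀ = 2 / Real.pi * Real.arctan (|b₂| / k₁)) :
    let J : Matrix (Fin 3) (Fin 3) ℂ :=
      Matrix.of ![![(k₁ : ℂ), 0, (b₂ : ℂ)], ![0, (k₂ : ℂ), 0], ![-(b₂ : ℂ), 0, (k₁ : ℂ)]]
    q₀ ∈ Set.Ioo (0 : ℝ) 1 ∧
    (∀ q : ℝ, 0 < q → q < q₀ → ∀ z : ℂ, (J - z • 1).det = 0 →
      |z.arg| > q * Real.pi / 2) ∧
    (∀ z : ℂ, (J - z • 1).det = 0 → |z.arg| ≥ q₀ * Real.pi / 2) := by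
  intro J
  have hpi : (0 : ℝ) < Real.pi := Real.pi_pos
  set a := Real.arctan (|b₂| / k₁) with ha
  have hbk : 0 < |b₂| / k₁ := div_pos (abs_pos.mpr hb₂) hk₁
  have ha0 : 0 < a := by have := Real.arctan_strictMono hbk; rwa [Real.arctan_zero] at this
  have ha2 : a < Real.pi / 2 := Real.arctan_lt_pi_div_two _
  have hq0a : q₀ * Real.pi / 2 = a := by
    rw [hq₀]; field_simp
  -- eigenvalue classification
  have hclass : ∀ z : ℂ, (J - z • 1).det = 0 →
      z = (k₂ : ℂ) ∨ z = (k₁ : ℂ) + (b₂ : ℂ) * Complex.I ∨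
        z = (k₁ : ℂ) + ((-b₂ : ℝ) : ℂ) * Complex.I := by
    intro z hz
    have hdet : (J - z • 1).det =
        ((k₂ : ℂ) - z) * (((k₁ : ℂ) - z - (b₂ : ℂ) * Complex.I) *
          ((k₁ : ℂ) - z + (b₂ : ℂ) * Complex.I)) := by
      simp [J, Matrix.det_fin_three, Matrix.smul_apply, Matrix.one_apply]
      ring_nf
      simp [Complex.I_sq]
      ring
    rw [hdet] at hz
    rcases mul_eq_zero.mp hz with h | h
    · left; linear_combination -h
    rcases mul_eq_zero.mp h with h | h
    · right; right; push_cast; linear_combination -h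
    · right; left; push_cast; linear_combination -h
  -- args of the eigenvalues
  have hargk₂ : Complex.arg (k₂ : ℂ) = Real.pi := Complex.arg_ofReal_of_neg hk₂
  have harg : ∀ z : ℂ, (J - z • 1).det = 0 → |z.arg| = Real.pi ∨ |z.arg| = a := by
    intro z hz
    rcases hclass z hz with h | h | h
    · left; rw [h, hargk₂, abs_of_pos hpi]
    · right
      rw [h, arg_mk_pos_re hk₁, abs_arctan_eq, abs_div, abs_of_pos hk₁]
    · right
      rw [h, arg_mk_pos_re hk₁, abs_arctan_eq, abs_div, abs_of_pos hk₁, abs_neg]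
      all_goals exact hk₁
  refine ⟨⟨by rw [hq₀]; exact mul_pos (by positivity) ha0, ?_⟩, ?_, ?_⟩
  · rw [hq₀]
    calc 2 / Real.pi * a < 2 / Real.pi * (Real.pi / 2) := by
          apply mul_lt_mul_of_pos_left ha2 (by positivity)
      _ = 1 := by field_simp
  · intro q hq1 hq2 z hz
    have hqa : q * Real.pi / 2 < a := by
      rw [← hq0a]
      have := mul_lt_mul_of_pos_right hq2 hpi
      linarith
    rcases harg z hz with h | h <;> rw [h] <;> linarith
  · intro z hz
    rcases harg z hz with h | h <;> rw [h, hq0a] <;> linarith
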